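/- Let {a_i} be a sequence of nonnegative reals with ∑_{i : a_i ≠ 0} (a_i - 1)^2 < ∞, and let k > 0 be an integer. Suppose there exist indices n_1, …, n_k with 0 < a_{n_1} ≤ … ≤ a_{n_k} ≤ a_j for every j ∉ {n_1,…,n_k} with a_j ≠ 0. Define b_i = 1 if a_i ≠ 0 and i ∉ {n_1,…,n_k}, and b_i = 0 otherwise. Then for every sequence {c_i} with c_i ∈ {-1,0,1}, ∑_i (a_i - c_i)^2 < ∞, and #{i : c_i = 0 ∧ a_i > 0} - #{i : c_i ≠ 0 ∧ a_i = 0} = k, one has ∑_i (a_i - b_i)^2 ≤ ∑_i (a_i - c_i)^2. -/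

import Mathlib

set_option maxHeartbeats 1600000 in
/-- Diagonal version of existence of symmetric approximation in the positive-index-k
component: zeroing out the k smallest nonzero values and matching all other nonzero
values by 1 minimizes the ℓ² cost among ±1/0 sequences of index k. -/
theorem stmt_3 (a : ℕ → ℝ) (ha : ∀ i, 0 ≤ a i)
    (hsum : Summable fun i => if a i ≠ 0 then (a i - 1) ^ 2 else 0)
    (k : ℕ) (hk : 0 < k)
    (n : Fin k → ℕ) (hn : Function.Injective n)
    (hpos : ∀ j, 0 < a (n j))
    (hmono : Monotone (a ∘ n))
    (hmin : ∀ (i : Fin k) (j : ℕ), j ∉ Set.range n → a j ≠ 0 → a (n i) ≤ a j)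
    (b : ℕ → ℝ)
    (hb : ∀ i, b i = if a i ≠ 0 ∧ i ∉ Set.range n then 1 else 0)
    (c : ℕ → ℝ) (hc : ∀ i, c i = -1 ∨ c i = 0 ∨ c i = 1)
    (hcsum : Summable fun i => (a i - c i) ^ 2)
    (hfin0 : {i | c i = 0 ∧ 0 < a i}.Finite)
    (hfin1 : {i | c i ≠ 0 ∧ a i = 0}.Finite)
    (hindex : ({i | c i = 0 ∧ 0 < a i}.ncard : ℤ) - {i | c i ≠ 0 ∧ a i = 0}.ncard = k) :
    (∑' i, (a i - b i) ^ 2) ≤ ∑' i, (a i - c i) ^ 2 := by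
  classical
  set f : ℕ → ℝ := fun i => (a i - b i) ^ 2 with hfdef
  set g : ℕ → ℝ := fun i => (a i - c i) ^ 2 with hgdef
  -- the finset of indices hit by n
  set N : Finset ℕ := Finset.image n Finset.univ with hNdef
  have hmemN : ∀ i, i ∈ N ↔ i ∈ Set.range n := by
    intro i; simp [hNdef, Set.mem_range, eq_comm]
  have hcardN : N.card = k := by
    rw [hNdef, Finset.card_image_of_injective _ hn, Finset.card_univ, Fintype.card_fin]
  -- the top value among the a (n j)
  have hklt : k - 1 < k := by omega
  set A : ℝ := a (n ⟨k - 1, hklt⟩) with hAdef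
  have hAtop : ∀ j : Fin k, a (n j) ≤ A := by
    intro j
    exact hmono (by simp [Fin.le_def]; omega)
  have hApos : 0 < A := hpos _
  have hAmin : ∀ i : ℕ, i ∉ Set.range n → a i ≠ 0 → A ≤ a i := by
    intro i hi hai; exact hmin _ i hi hai
  -- summability of f
  have hfsum : Summable f := by
    have hd : ∀ i ∉ N, (fun i => f i - (if a i ≠ 0 then (a i - 1) ^ 2 else 0)) i = 0 := by
      intro i hi
      by_cases h : a i = 0
      · simp [hfdef, hb i, h]
      · have hbi : b i = 1 := by rw [hb i]; simp [h, (hmemN i).not.mp hi]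
        simp [hfdef, hbi, h]
    have := hsum.add (summable_of_ne_finset_zero hd)
    exact this.congr (fun i => by ring)
  -- the set where c = -1 is finite
  have hneg : {i | c i = -1}.Finite := by
    have h1 : ∀ᶠ i in Filter.cofinite, g i < 1 :=
      hcsum.tendsto_cofinite_zero.eventually_lt_const one_pos
    refine (Filter.eventually_cofinite.mp h1).subset ?_
    intro i hi
    simp only [Set.mem_setOf_eq] at hi ⊢
    simp only [hgdef, not_lt]
    rw [hi]
    nlinarith [ha i]
  -- the exceptional finset
  set F : Finset ℕ := ((N ∪ hfin0.toFinset) ∪ hfin1.toFinset) ∪ hneg.toFinset with hFdef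
  -- off F, f = g
  have hoff : ∀ i ∉ F, f i = g i := by
    intro i hi
    simp only [hFdef, Finset.mem_union, not_or, Set.Finite.mem_toFinset,
      Set.mem_setOf_eq] at hi
    obtain ⟨⟨⟨hiN, hiS⟩, hiT⟩, hineg⟩ := hi
    by_cases h : a i = 0
    · have hc0 : c i = 0 := by by_contra hcne; exact hiT ⟨hcne, h⟩
      simp [hfdef, hgdef, hb i, h, hc0]
    · have hcne : c i ≠ 0 := by
        intro hc0
        exact hiS ⟨hc0, lt_of_le_of_ne (ha i) (Ne.symm h)⟩
      have hc1 : c i = 1 := by rcases hc i with h' | h' | h' <;> simp_all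
      have hbi : b i = 1 := by rw [hb i]; simp [h, (hmemN i).not.mp hiN]
      simp [hfdef, hgdef, hbi, hc1]
  -- the auxiliary lower bound function h
  set H : ℕ → ℝ := fun i =>
    if a i = 0 ∧ c i ≠ 0 then 1
    else if i ∈ N ∧ c i ≠ 0 then 1 - 2 * a i
    else if a i ≠ 0 ∧ i ∉ N ∧ c i = 0 then 2 * a i - 1
    else 0 with hHdef
  -- pointwise bound
  have hpw : ∀ i, f i + H i ≤ g i := by
    intro i
    have hai := ha i
    have hfi : f i = (a i - b i) ^ 2 := rfl
    have hgi : g i = (a i - c i) ^ 2 := rfl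
    rw [hfi, hgi]
    by_cases h : a i = 0
    · have hbi : b i = 0 := by rw [hb i]; simp [h]
      have hiN : i ∉ N := by
        intro hiN
        obtain ⟨j, rfl⟩ := (hmemN i).mp hiN
        exact absurd h (ne_of_gt (hpos j))
      by_cases h' : c i = 0
      · have hHi : H i = 0 := by simp [hHdef, h, h', hiN]
        rw [hHi, hbi, h, h']; norm_num
      · have hHi : H i = 1 := by simp [hHdef, h, h']
        rw [hHi, hbi, h]
        have h2 : c i = -1 ∨ c i = 1 := by rcases hc i with h'' | h'' | h'' <;> tauto
        rcases h2 with h'' | h'' <;> rw [h''] <;> norm_num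
    · by_cases hiN : i ∈ N
      · have hbi : b i = 0 := by rw [hb i]; simp [(hmemN i).mp hiN]
        by_cases h' : c i = 0
        · have hHi : H i = 0 := by simp [hHdef, h, h', hiN]
          rw [hHi, hbi, h']; norm_num
        · have hHi : H i = 1 - 2 * a i := by simp [hHdef, h, h', hiN]
          rw [hHi, hbi]
          have h2 : c i = -1 ∨ c i = 1 := by rcases hc i with h'' | h'' | h'' <;> tauto
          rcases h2 with h'' | h'' <;> rw [h''] <;> nlinarith
      · have hbi : b i = 1 := by rw [hb i]; simp [h, (hmemN i).not.mp hiN]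
        by_cases h' : c i = 0
        · have hHi : H i = 2 * a i - 1 := by simp [hHdef, h, h', hiN]
          rw [hHi, hbi, h']; nlinarith
        · have hHi : H i = 0 := by simp [hHdef, h, h', hiN]
          rw [hHi, hbi]
          have h2 : c i = -1 ∨ c i = 1 := by rcases hc i with h'' | h'' | h'' <;> tauto
          rcases h2 with h'' | h'' <;> rw [h''] <;> nlinarith
  -- named finsets
  set S' : Finset ℕ := hfin0.toFinset with hS'def
  set T' : Finset ℕ := hfin1.toFinset with hT'def
  set P : Finset ℕ := N.filter (fun i => c i ≠ 0) with hPdef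
  set Q : Finset ℕ := S' \ N with hQdef
  have hmemS' : ∀ i, i ∈ S' ↔ c i = 0 ∧ 0 < a i := by
    intro i; simp [hS'def]
  have hmemT' : ∀ i, i ∈ T' ↔ c i ≠ 0 ∧ a i = 0 := by
    intro i; simp [hT'def]
  -- cardinality bookkeeping
  have hPQ : Q.card = T'.card + P.card := by
    have h1 : (N.filter (fun i => c i = 0)).card + (N.filter (fun i => ¬ c i = 0)).card
        = N.card := Finset.card_filter_add_card_filter_not _
    have h2 : N.filter (fun i => c i = 0) = N ∩ S' := by
      ext i
      simp only [Finset.mem_filter, Finset.mem_inter, hmemS' i]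
      constructor
      · rintro ⟨hiN, hci⟩
        obtain ⟨j, rfl⟩ := (hmemN i).mp hiN
        exact ⟨hiN, hci, hpos j⟩
      · rintro ⟨hiN, hci, -⟩; exact ⟨hiN, hci⟩
    have h3 : (S' \ N).card + (S' ∩ N).card = S'.card :=
      Finset.card_sdiff_add_card_inter _ _
    have h4 : S'.card = k + T'.card := by
      have e0 : {i | c i = 0 ∧ 0 < a i}.ncard = S'.card :=
        Set.ncard_eq_toFinset_card _ hfin0
      have e1 : {i | c i ≠ 0 ∧ a i = 0}.ncard = T'.card :=
        Set.ncard_eq_toFinset_card _ hfin1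
      rw [e0, e1] at hindex
      omega
    have h5 : (S' ∩ N).card = (N ∩ S').card := by rw [Finset.inter_comm]
    rw [hQdef, hPdef]
    rw [h2] at h1
    simp only [ne_eq] at h1 ⊢
    omega
  -- H vanishes outside T' ∪ P ∪ Q
  have hHsupp : ∀ i, i ∉ (T' ∪ P) ∪ Q → H i = 0 := by
    intro i hi
    simp only [Finset.mem_union, not_or] at hi
    obtain ⟨⟨hiT, hiP⟩, hiQ⟩ := hi
    simp only [hHdef]
    rw [if_neg, if_neg, if_neg]
    · rintro ⟨hne, hiN, hc0⟩
      refine hiQ ?_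
      rw [hQdef, Finset.mem_sdiff, hmemS' i]
      exact ⟨⟨hc0, lt_of_le_of_ne (ha i) (Ne.symm hne)⟩, hiN⟩
    · rintro ⟨hiN, hcne⟩
      refine hiP ?_
      rw [hPdef, Finset.mem_filter]
      exact ⟨hiN, hcne⟩
    · rintro ⟨ha0, hcne⟩
      exact hiT ((hmemT' i).mpr ⟨hcne, ha0⟩)
  have hdisj1 : Disjoint T' P := by
    rw [Finset.disjoint_left]
    intro i hiT hiP
    rw [hPdef, Finset.mem_filter] at hiP
    obtain ⟨j, rfl⟩ := (hmemN _).mp hiP.1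
    exact absurd ((hmemT' _).mp hiT).2 (ne_of_gt (hpos j))
  have hdisj2 : Disjoint (T' ∪ P) Q := by
    rw [Finset.disjoint_left]
    intro i hi hiQ
    rw [hQdef, Finset.mem_sdiff, hmemS' i] at hiQ
    rcases Finset.mem_union.mp hi with hiT | hiP
    · exact absurd ((hmemT' i).mp hiT).2 (ne_of_gt hiQ.1.2)
    · rw [hPdef, Finset.mem_filter] at hiP
      exact hiP.2 hiQ.1.1
  have hsub : (T' ∪ P) ∪ Q ⊆ F := by
    intro i hi
    simp only [hFdef, Finset.mem_union]
    rcases Finset.mem_union.mp hi with hi | hiQ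
    · rcases Finset.mem_union.mp hi with hiT | hiP
      · exact Or.inl (Or.inr hiT)
      · exact Or.inl (Or.inl (Or.inl (Finset.mem_filter.mp hiP).1))
    · exact Or.inl (Or.inl (Or.inr (Finset.mem_sdiff.mp hiQ).1))
  -- the sum of H over F is nonnegative
  have hHsum : 0 ≤ ∑ i ∈ F, H i := by
    have e1 : ∑ i ∈ F, H i = ∑ i ∈ (T' ∪ P) ∪ Q, H i :=
      (Finset.sum_subset hsub (fun i _ hi => hHsupp i hi)).symm
    have e2 : ∑ i ∈ (T' ∪ P) ∪ Q, H i
        = ∑ i ∈ T', H i + ∑ i ∈ P, H i + ∑ i ∈ Q, H i := by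
      rw [Finset.sum_union hdisj2, Finset.sum_union hdisj1]
    have eT : ∑ i ∈ T', H i = (T'.card : ℝ) := by
      rw [Finset.card_eq_sum_ones, Nat.cast_sum]
      refine Finset.sum_congr rfl (fun i hi => ?_)
      obtain ⟨hcne, ha0⟩ := (hmemT' i).mp hi
      simp [hHdef, ha0, hcne]
    have eP : (P.card : ℝ) * (1 - 2 * A) ≤ ∑ i ∈ P, H i := by
      rw [Finset.card_eq_sum_ones, Nat.cast_sum, Finset.sum_mul]
      refine Finset.sum_le_sum (fun i hi => ?_)
      rw [hPdef, Finset.mem_filter] at hi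
      obtain ⟨hiN, hcne⟩ := hi
      have ha0 : a i ≠ 0 := by
        obtain ⟨j, rfl⟩ := (hmemN i).mp hiN
        exact ne_of_gt (hpos j)
      have hle : a i ≤ A := by
        obtain ⟨j, rfl⟩ := (hmemN i).mp hiN
        exact hAtop j
      have hHi : H i = 1 - 2 * a i := by simp [hHdef, ha0, hcne, hiN]
      rw [hHi]
      push_cast
      linarith
    have eQ : (Q.card : ℝ) * (2 * A - 1) ≤ ∑ i ∈ Q, H i := by
      rw [Finset.card_eq_sum_ones, Nat.cast_sum, Finset.sum_mul]
      refine Finset.sum_le_sum (fun i hi => ?_)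
      rw [hQdef, Finset.mem_sdiff, hmemS' i] at hi
      obtain ⟨⟨hc0, hapos⟩, hiN⟩ := hi
      have ha0 : a i ≠ 0 := ne_of_gt hapos
      have hge : A ≤ a i := hAmin i ((hmemN i).not.mp hiN) ha0
      have hHi : H i = 2 * a i - 1 := by simp [hHdef, ha0, hc0, hiN]
      rw [hHi]
      push_cast
      linarith
    have hcards : (Q.card : ℝ) = (T'.card : ℝ) + (P.card : ℝ) := by
      exact_mod_cast hPQ
    have hT0 : (0 : ℝ) ≤ (T'.card : ℝ) := Nat.cast_nonneg _
    have hP0 : (0 : ℝ) ≤ (P.card : ℝ) := Nat.cast_nonneg _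
    nlinarith [eP, eQ, hApos, e1, e2, eT, hcards, hT0, hP0,
      mul_nonneg hT0 hApos.le]
  -- finite comparison on F
  have hFle : ∑ i ∈ F, f i ≤ ∑ i ∈ F, g i := by
    have h1 : ∑ i ∈ F, f i + ∑ i ∈ F, H i ≤ ∑ i ∈ F, g i := by
      rw [← Finset.sum_add_distrib]
      exact Finset.sum_le_sum (fun i _ => hpw i)
    linarith
  -- conclude via complements
  have h1 := Summable.sum_add_tsum_subtype_compl hfsum F
  have h2 := Summable.sum_add_tsum_subtype_compl hcsum F
  have h3 : (∑' i : {x // x ∉ F}, f i) = ∑' i : {x // x ∉ F}, g i :=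
    tsum_congr (fun i => hoff i.1 i.2)
  calc (∑' i, f i) = ∑ i ∈ F, f i + ∑' i : {x // x ∉ F}, f i := h1.symm
    _ ≤ ∑ i ∈ F, g i + ∑' i : {x // x ∉ F}, g i := by rw [h3]; linarith
    _ = ∑' i, g i := h2
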